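/- arXiv:1401.5398 — 4 statements merged into one kernel-verified Lean document; each statement's English description precedes it below -/
import Mathlib

section
/- Let a ∈ (0,1) and let θ have the marginal Dirichlet–Laplace density Π(θ) = (1/(2^{(1+a)/2} Γ(a))) |θ|^{(a-1)/2} K_{1-a}(√(2|θ|)) on ℝ, where K_ν is the modified Bessel function of the second kind. Then Π(θ) → ∞ as θ → 0; i.e., the density is unbounded with a singularity at zero. -/
open Real MeasureTheory Filter Set
open scoped Interval

/-- Modified Bessel function of the second kind, via the integral representation
`K_ν(x) = Γ(ν+1/2)(2x)^ν/√π ∫_0^∞ cos t/(t²+x²)^{ν+1/2} dt`. -/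
noncomputable def besselK (ν x : ℝ) : ℝ :=
  Real.Gamma (ν + 1/2) * (2*x) ^ ν / Real.sqrt π *
    ∫ t in Set.Ioi (0:ℝ), Real.cos t / (t^2 + x^2) ^ (ν + 1/2)

/-- Marginal Dirichlet–Laplace density with parameter `a`. -/
noncomputable def dlDensity (a θ : ℝ) : ℝ :=
  (1 / (2 ^ ((1+a)/2) * Real.Gamma a)) * |θ| ^ ((a-1)/2) *
    besselK (1-a) (Real.sqrt (2*|θ|))

lemma dl_aux_sq_rpow {p t : ℝ} (ht : 0 < t) : (t^2) ^ p = t ^ (2*p) := by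
  rw [← Real.rpow_natCast t 2, ← Real.rpow_mul ht.le]
  norm_num

lemma dl_aux_abs_le (p x t : ℝ) (hp : 0 ≤ p) (ht : 0 < t) :
    |Real.cos t / (t^2 + x^2) ^ p| ≤ t ^ (-(2*p)) := by
  have hden : (0:ℝ) < t^2 + x^2 := by positivity
  have h1 : (0:ℝ) < (t^2 + x^2) ^ p := Real.rpow_pos_of_pos hden _
  have h2 : t ^ (2*p) ≤ (t^2+x^2) ^ p := by
    calc t ^ (2*p) = (t^2) ^ p := (dl_aux_sq_rpow ht).symm
      _ ≤ (t^2+x^2)^p :=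
        Real.rpow_le_rpow (by positivity) (by nlinarith [sq_nonneg x]) hp
  have h4 : (0:ℝ) < t ^ (2*p) := Real.rpow_pos_of_pos ht _
  rw [abs_div, abs_of_pos h1, Real.rpow_neg ht.le, inv_eq_one_div]
  exact div_le_div₀ zero_le_one (Real.abs_cos_le_one t) h4 h2

lemma dl_aux_cont (p x : ℝ) (hp : 0 ≤ p) (hx : 0 < x) :
    Continuous fun t : ℝ => Real.cos t / (t^2 + x^2) ^ p := by
  have hden : ∀ t : ℝ, (0:ℝ) < t^2 + x^2 := fun t =>
    add_pos_of_nonneg_of_pos (sq_nonneg t) (pow_pos hx 2)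
  exact Real.continuous_cos.div
    (((continuous_pow 2).add continuous_const).rpow_const fun t => Or.inl (hden t).ne')
    fun t => (Real.rpow_pos_of_pos (hden t) p).ne'

lemma dl_aux_int (p x : ℝ) (hp : 1/2 < p) (hx : 0 < x) :
    IntegrableOn (fun t => Real.cos t / (t^2 + x^2) ^ p) (Ioi (0:ℝ)) := by
  have hp0 : 0 ≤ p := by linarith
  have hc := dl_aux_cont p x hp0 hx
  rw [← Ioc_union_Ioi_eq_Ioi (zero_le_one (α := ℝ))]
  refine IntegrableOn.union ?_ ?_
  · exact hc.integrableOn_Icc.mono_set Ioc_subset_Icc_self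
  · refine Integrable.mono'
      (integrableOn_Ioi_rpow_of_lt (by linarith : -(2*p) < -1) one_pos)
      hc.aestronglyMeasurable.restrict ?_
    filter_upwards [ae_restrict_mem measurableSet_Ioi] with t ht
    have ht0 : (0:ℝ) < t := lt_trans one_pos ht
    rw [Real.norm_eq_abs]
    exact dl_aux_abs_le p x t hp0 ht0

lemma dl_aux_tendsto (p : ℝ) (hp : 1/2 < p) :
    Tendsto (fun x : ℝ => ∫ t in Ioi (0:ℝ), Real.cos t / (t^2 + x^2) ^ p)
      (nhdsWithin 0 (Ioi 0)) atTop := by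
  have hp0 : (0:ℝ) ≤ p := by linarith
  have hp1 : (0:ℝ) < 2*p - 1 := by linarith
  have hne : (2*p - 1 : ℝ) ≠ 0 := ne_of_gt hp1
  have hne' : (-(2*p) + 1 : ℝ) ≠ 0 := by intro h; apply hne; linarith
  set c : ℝ := Real.cos 1 * 2 ^ (-p) / (2*p - 1) with hc
  have hcpos : 0 < c := by
    have h1 := Real.cos_one_pos
    have h2 : (0:ℝ) < (2:ℝ) ^ (-p) := Real.rpow_pos_of_pos two_pos _
    positivity
  have hcomp : Tendsto (fun x : ℝ => c * (x ^ (1 - 2*p) - 1) - 1/(2*p-1))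
      (nhdsWithin 0 (Ioi 0)) atTop := by
    have h1 : Tendsto (fun x : ℝ => x ^ (1 - 2*p)) (nhdsWithin 0 (Ioi 0)) atTop := by
      have h2 := (tendsto_rpow_atTop hp1).comp tendsto_inv_nhdsGT_zero
      refine h2.congr' ?_
      filter_upwards [self_mem_nhdsWithin] with x hx
      have hx0 : (0:ℝ) < x := hx
      show (x⁻¹) ^ (2*p-1) = x ^ (1-2*p)
      rw [← Real.rpow_neg_one x, ← Real.rpow_mul hx0.le]
      congr 1; ring
    have h3 := (tendsto_atTop_add_const_right _ (-1 : ℝ) h1).const_mul_atTop hcpos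
    have h4 := tendsto_atTop_add_const_right _ (-(1/(2*p-1)) : ℝ) h3
    refine h4.congr fun x => ?_
    ring
  refine tendsto_atTop_mono' _ ?_ hcomp
  filter_upwards [Ioo_mem_nhdsGT (one_pos : (0:ℝ) < 1)] with x hx
  obtain ⟨hx0, hx1⟩ := hx
  set f : ℝ → ℝ := fun t => Real.cos t / (t^2 + x^2) ^ p with hf
  have hint := dl_aux_int p x hp hx0
  have hIoc : IntegrableOn f (Ioc 0 1) := hint.mono_set Ioc_subset_Ioi_self
  have hIoi1 : IntegrableOn f (Ioi 1) := hint.mono_set (Ioi_subset_Ioi zero_le_one)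
  have hsplit : ∫ t in Ioi (0:ℝ), f t = (∫ t in Ioc (0:ℝ) 1, f t) + ∫ t in Ioi (1:ℝ), f t := by
    rw [← setIntegral_union (Ioc_disjoint_Ioi le_rfl) measurableSet_Ioi hIoc hIoi1,
      Ioc_union_Ioi_eq_Ioi zero_le_one]
  -- tail bound
  have htail : -(1/(2*p-1)) ≤ ∫ t in Ioi (1:ℝ), f t := by
    have hg : IntegrableOn (fun t : ℝ => t ^ (-(2*p))) (Ioi 1) :=
      integrableOn_Ioi_rpow_of_lt (by linarith) one_pos
    have h1 : ∫ t in Ioi (1:ℝ), -(t ^ (-(2*p))) ≤ ∫ t in Ioi (1:ℝ), f t := by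
      refine setIntegral_mono_on hg.neg hIoi1 measurableSet_Ioi ?_
      intro t ht
      have ht0 : (0:ℝ) < t := lt_trans one_pos ht
      have h2 := dl_aux_abs_le p x t hp0 ht0
      have h3 := neg_abs_le (f t)
      have : |f t| ≤ t ^ (-(2*p)) := h2
      linarith
    rw [integral_neg, integral_Ioi_rpow_of_lt (by linarith) one_pos, Real.one_rpow] at h1
    have heq : -(1/(2*p-1)) = -((-1:ℝ) / (-(2*p)+1)) := by
      field_simp
      ring
    rw [heq]
    exact h1
  -- head bound
  have h0mem : (0:ℝ) ∉ Set.uIcc x 1 := by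
    rw [Set.uIcc_of_le hx1.le, Set.mem_Icc]
    push_neg
    intro h
    exact absurd h (not_le.mpr hx0)
  have hgi : IntegrableOn (fun t : ℝ => Real.cos 1 * 2^(-p) * t ^ (-(2*p))) (Ioc x 1) := by
    have h1 : IntervalIntegrable (fun t : ℝ => t ^ (-(2*p))) volume x 1 :=
      intervalIntegral.intervalIntegrable_rpow (Or.inr h0mem)
    exact ((intervalIntegrable_iff_integrableOn_Ioc_of_le hx1.le).mp h1).const_mul _
  have hf_Iocx1 : IntegrableOn f (Ioc x 1) := hIoc.mono_set (Ioc_subset_Ioc_left hx0.le)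
  have hcos_ge : ∀ t : ℝ, 0 < t → t ≤ 1 → Real.cos 1 ≤ Real.cos t := fun t ht0 ht1 =>
    Real.cos_le_cos_of_nonneg_of_le_pi ht0.le (by linarith [Real.pi_gt_three]) ht1
  have hmono : ∫ t in Ioc x 1, Real.cos 1 * 2^(-p) * t ^ (-(2*p)) ≤ ∫ t in Ioc x 1, f t := by
    refine setIntegral_mono_on hgi hf_Iocx1 measurableSet_Ioc ?_
    intro t ht
    obtain ⟨htx, ht1⟩ := ht
    have ht0 : (0:ℝ) < t := lt_trans hx0 htx
    have hcos := hcos_ge t ht0 ht1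
    have hle : (t^2+x^2) ^ p ≤ (2:ℝ)^p * t^(2*p) := by
      calc (t^2+x^2)^p ≤ (2*t^2)^p :=
            Real.rpow_le_rpow (by positivity) (by nlinarith) hp0
        _ = 2^p * (t^2)^p := Real.mul_rpow (by norm_num) (by positivity)
        _ = 2^p * t^(2*p) := by rw [dl_aux_sq_rpow ht0]
    have hd1 : (0:ℝ) < (t^2+x^2)^p := Real.rpow_pos_of_pos (by positivity) _
    have ht2p : (0:ℝ) < t ^ (2*p) := Real.rpow_pos_of_pos ht0 _
    have h2p : (0:ℝ) < (2:ℝ) ^ p := Real.rpow_pos_of_pos two_pos _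
    have key : Real.cos 1 / ((2:ℝ)^p * t^(2*p)) ≤ Real.cos t / (t^2+x^2)^p :=
      div_le_div₀ (le_trans Real.cos_one_pos.le hcos) hcos hd1 hle
    have heq2 : Real.cos 1 * 2^(-p) * t^(-(2*p)) = Real.cos 1 / ((2:ℝ)^p * t^(2*p)) := by
      rw [Real.rpow_neg (by norm_num : (0:ℝ) ≤ 2), Real.rpow_neg ht0.le]
      field_simp
    rw [heq2]
    exact key
  have hval : ∫ t in Ioc x 1, Real.cos 1 * 2^(-p) * t ^ (-(2*p))
      = Real.cos 1 * 2^(-p) * (((1:ℝ) - x^(-(2*p)+1)) / (-(2*p)+1)) := by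
    rw [← intervalIntegral.integral_of_le hx1.le, intervalIntegral.integral_const_mul,
      integral_rpow (Or.inr ⟨by intro h; apply hne'; linarith, h0mem⟩), Real.one_rpow]
  have hxp : x ^ (-(2*p)+1) = x ^ (1-2*p) := by congr 1; ring
  have heq3 : c * (x^(1-2*p) - 1)
      = Real.cos 1 * 2^(-p) * (((1:ℝ) - x^(-(2*p)+1)) / (-(2*p)+1)) := by
    rw [hxp, hc, show (-(2*p)+1 : ℝ) = -(2*p-1) by ring, div_neg]
    ring
  have hsub : ∫ t in Ioc x 1, f t ≤ ∫ t in Ioc (0:ℝ) 1, f t := by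
    refine setIntegral_mono_set hIoc ?_
      (HasSubset.Subset.eventuallyLE (Ioc_subset_Ioc_left hx0.le))
    filter_upwards [ae_restrict_mem measurableSet_Ioc] with t ht
    obtain ⟨ht0, ht1⟩ := ht
    have hcnn : 0 ≤ Real.cos t := le_trans Real.cos_one_pos.le (hcos_ge t ht0 ht1)
    have hden : (0:ℝ) < t^2 + x^2 := by positivity
    exact div_nonneg hcnn (Real.rpow_pos_of_pos hden p).le
  have hhead : c * (x^(1-2*p) - 1) ≤ ∫ t in Ioc (0:ℝ) 1, f t := by
    rw [heq3]
    refine le_trans (le_of_eq ?_) (le_trans hmono hsub)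
    rw [hval]
  show c * (x ^ (1 - 2*p) - 1) - 1/(2*p-1) ≤ ∫ t in Ioi (0:ℝ), f t
  rw [hsplit]
  linarith

/-- The marginal DL density is unbounded with a singularity at zero:
`Π(θ) → ∞` as `θ → 0`. -/
theorem dlDensity_tendsto_atTop_of_lt_one (a : ℝ) (ha0 : 0 < a) (ha1 : a < 1) :
    Tendsto (fun θ : ℝ => dlDensity a θ) (nhdsWithin 0 {0}ᶜ) atTop := by
  set p : ℝ := 1 - a + 1/2 with hpdef
  have hp : 1/2 < p := by rw [hpdef]; linarith
  set K : ℝ := (1 / (2 ^ ((1+a)/2) * Real.Gamma a)) *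
    (2 ^ (1-a) * 2 ^ ((1-a)/2) * (Real.Gamma p / Real.sqrt π)) with hK
  have hKpos : 0 < K := by
    have h1 : 0 < Real.Gamma a := Real.Gamma_pos_of_pos ha0
    have h2 : 0 < Real.Gamma p := Real.Gamma_pos_of_pos (by rw [hpdef]; linarith)
    have h3 : 0 < Real.sqrt π := Real.sqrt_pos.mpr Real.pi_pos
    have h4 : (0:ℝ) < 2 ^ ((1+a)/2) := Real.rpow_pos_of_pos two_pos _
    have h5 : (0:ℝ) < 2 ^ ((1-a)/2) := Real.rpow_pos_of_pos two_pos _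
    have h6 : (0:ℝ) < 2 ^ (1-a) := Real.rpow_pos_of_pos two_pos _
    rw [hK]
    positivity
  have hmap : Tendsto (fun θ : ℝ => Real.sqrt (2 * |θ|)) (nhdsWithin 0 {0}ᶜ)
      (nhdsWithin 0 (Ioi 0)) := by
    rw [tendsto_nhdsWithin_iff]
    constructor
    · have hcont : Continuous fun θ : ℝ => Real.sqrt (2*|θ|) :=
        Real.continuous_sqrt.comp (continuous_const.mul continuous_abs)
      have h0 := hcont.tendsto 0
      simp only [abs_zero, mul_zero, Real.sqrt_zero] at h0
      exact h0.mono_left nhdsWithin_le_nhds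
    · filter_upwards [self_mem_nhdsWithin] with θ hθ
      have hθ0 : θ ≠ 0 := hθ
      have : 0 < |θ| := abs_pos.mpr hθ0
      exact Real.sqrt_pos.mpr (by positivity)
  have hI := (dl_aux_tendsto p hp).comp hmap
  have hmain := hI.const_mul_atTop hKpos
  refine hmain.congr' ?_
  filter_upwards [self_mem_nhdsWithin] with θ hθ
  have hθ0 : θ ≠ 0 := hθ
  have habs : 0 < |θ| := abs_pos.mpr hθ0
  simp only [Function.comp_apply]
  set x : ℝ := Real.sqrt (2 * |θ|) with hxdef
  have hx0 : 0 < x := Real.sqrt_pos.mpr (by positivity)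
  have key : |θ| ^ ((a-1)/2) * (2*x) ^ (1-a) = 2 ^ (1-a) * 2 ^ ((1-a)/2) := by
    have h1 : (2*x) ^ (1-a) = (2:ℝ) ^ (1-a) * x ^ (1-a) :=
      Real.mul_rpow (by norm_num) hx0.le
    have h2 : x ^ (1-a) = (2*|θ|) ^ ((1/2) * (1-a)) := by
      rw [hxdef, Real.sqrt_eq_rpow, ← Real.rpow_mul (by positivity)]
    have h3 : (2*|θ|) ^ ((1/2) * (1-a)) = (2:ℝ) ^ ((1-a)/2) * |θ| ^ ((1-a)/2) := by
      rw [show (1/2) * (1-a) = (1-a)/2 by ring, Real.mul_rpow (by norm_num) (abs_nonneg θ)]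
    have h4 : |θ| ^ ((a-1)/2) * |θ| ^ ((1-a)/2) = 1 := by
      rw [← Real.rpow_add habs, show (a-1)/2 + (1-a)/2 = 0 by ring, Real.rpow_zero]
    calc |θ| ^ ((a-1)/2) * (2*x) ^ (1-a)
        = (2:ℝ) ^ (1-a) * ((2:ℝ) ^ ((1-a)/2) * (|θ| ^ ((a-1)/2) * |θ| ^ ((1-a)/2))) := by
          rw [h1, h2, h3]; ring
      _ = 2 ^ (1-a) * 2 ^ ((1-a)/2) := by rw [h4]; ring
  simp only [dlDensity, besselK, ← hxdef, ← hpdef]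
  have expand : (1 / (2 ^ ((1+a)/2) * Real.Gamma a)) * |θ| ^ ((a-1)/2) *
      (Real.Gamma p * (2*x) ^ (1-a) / Real.sqrt π *
        ∫ t in Ioi (0:ℝ), Real.cos t / (t^2 + x^2) ^ p)
      = (1 / (2 ^ ((1+a)/2) * Real.Gamma a)) * (|θ| ^ ((a-1)/2) * (2*x) ^ (1-a)) *
      (Real.Gamma p / Real.sqrt π *
        ∫ t in Ioi (0:ℝ), Real.cos t / (t^2 + x^2) ^ p) := by
    ring
  rw [expand, key, hK]
  ring
end

section
/- Let θ ∈ ℝ have conditional distribution θ | ψ ∼ Laplace with scale ψ (density (2ψ)^{-1} e^{-|θ|/ψ}) where ψ ∼ Gamma(a, 1/2) (density ((1/2)^a/Γ(a)) ψ^{a-1} e^{-ψ/2}). Then the marginal density of θ is Π(θ) = (1/(2^{(1+a)/2} Γ(a))) |θ|^{(a-1)/2} K_{1-a}(√(2|θ|)), where K_ν is the modified Bessel function of the second kind. -/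
open Real MeasureTheory Filter Set

lemma cos_gaussian_real {s : ℝ} (hs : 0 < s) :
    ∫ x : ℝ, Real.cos x * Real.exp (-s * x ^ 2)
      = Real.sqrt (π / s) * Real.exp (-(1 / (4 * s))) := by
  have hb : (0:ℝ) < ((s:ℂ)).re := by simpa using hs
  have h := fourierIntegral_gaussian (b := (s:ℂ)) hb 1
  have key : ∀ x : ℝ, Complex.I * 1 * (x:ℂ) + -(s:ℂ) * (x:ℂ) ^ 2
      = Complex.ofReal (-s * x ^ 2) + (x:ℝ) * Complex.I := by
    intro x; push_cast; ring
  have hint : Integrable (fun x : ℝ => Complex.exp (Complex.I * 1 * x) * Complex.exp (-(s:ℂ) * x ^ 2)) := by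
    have h2 := integrable_cexp_quadratic hb Complex.I 0
    refine h2.congr (Filter.Eventually.of_forall fun x => ?_)
    dsimp only
    rw [← Complex.exp_add]
    congr 1
    push_cast
    ring
  have hre : ∀ x : ℝ, Real.cos x * Real.exp (-s * x ^ 2)
      = (Complex.exp (Complex.I * 1 * x) * Complex.exp (-(s:ℂ) * x ^ 2)).re := by
    intro x
    rw [← Complex.exp_add, key x, Complex.exp_re]
    simp only [Complex.add_re, Complex.ofReal_re, Complex.mul_re, Complex.I_re, Complex.I_im,
      Complex.ofReal_im, Complex.add_im, Complex.mul_im, mul_one, mul_zero, zero_add, add_zero,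
      zero_mul, sub_zero]
    ring
  calc ∫ x : ℝ, Real.cos x * Real.exp (-s * x ^ 2)
      = ∫ x : ℝ, (Complex.exp (Complex.I * 1 * x) * Complex.exp (-(s:ℂ) * x ^ 2)).re := by
        simp_rw [hre]
    _ = (∫ x : ℝ, Complex.exp (Complex.I * 1 * x) * Complex.exp (-(s:ℂ) * x ^ 2)).re := by
        rw [← RCLike.re_eq_complex_re, integral_re hint, RCLike.re_eq_complex_re]
    _ = Real.sqrt (π / s) * Real.exp (-(1 / (4 * s))) := by
        rw [h]
        have h3 : ((π:ℂ) / s) ^ (1/2 : ℂ) = Complex.ofReal ((π / s) ^ (1/2 : ℝ)) := by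
          rw [Complex.ofReal_cpow (by positivity)]
          push_cast
          norm_num
        have h4 : Complex.exp (-(1:ℂ) ^ 2 / (4 * s)) = Complex.ofReal (Real.exp (-(1 / (4 * s)))) := by
          rw [Complex.ofReal_exp]
          congr 1
          push_cast
          ring
        rw [h3, h4, ← Complex.ofReal_mul, Complex.ofReal_re, Real.sqrt_eq_rpow]

lemma cos_gaussian_Ioi {s : ℝ} (hs : 0 < s) :
    ∫ t in Ioi (0:ℝ), Real.cos t * Real.exp (-s * t ^ 2)
      = Real.sqrt (π / s) / 2 * Real.exp (-(1 / (4 * s))) := by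
  have h := integral_comp_abs (f := fun t => Real.cos t * Real.exp (-s * t ^ 2))
  have h2 : ∀ x : ℝ, Real.cos |x| * Real.exp (-s * |x| ^ 2)
      = Real.cos x * Real.exp (-s * x ^ 2) := by
    intro x; rw [Real.cos_abs, sq_abs]
  simp_rw [h2, cos_gaussian_real hs] at h
  linarith

lemma int_rpow_exp {c r : ℝ} (hc : -1 < c) (hr : 0 < r) :
    IntegrableOn (fun s : ℝ => s ^ c * Real.exp (-(r * s))) (Ioi 0) := by
  have h := integrableOn_rpow_mul_exp_neg_mul_rpow (p := 1) hc (by norm_num) hr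
  refine h.congr_fun (fun x hx => ?_) measurableSet_Ioi
  beta_reduce
  rw [Real.rpow_one, neg_mul]

lemma fubini_step {a x : ℝ} (ha0 : 0 < a) (ha1 : a < 1) (hx : 0 < x) :
    ∫ t in Ioi (0:ℝ), Real.cos t / (t ^ 2 + x ^ 2) ^ (1 - a + 1/2 : ℝ)
      = (1 / Real.Gamma (1 - a + 1/2)) * ((Real.sqrt π / 2) *
        ∫ s in Ioi (0:ℝ), s ^ (-a) * Real.exp (-(x ^ 2 * s)) * Real.exp (-(1/(4*s)))) := by
  set m : ℝ := 1 - a + 1/2 with hm_def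
  have hm : 0 < m := by rw [hm_def]; linarith
  have hΓ : 0 < Real.Gamma m := Real.Gamma_pos_of_pos hm
  set F : ℝ → ℝ → ℝ := fun t s => Real.cos t * (s ^ (m - 1) * Real.exp (-((t ^ 2 + x ^ 2) * s)))
    with hF_def
  set G : ℝ → ℝ → ℝ := fun t s => s ^ (m - 1) * Real.exp (-((t ^ 2 + x ^ 2) * s)) with hG_def
  have hr : ∀ t : ℝ, 0 < t ^ 2 + x ^ 2 := fun t => by positivity
  have stepA : ∀ t : ℝ, Real.cos t / (t ^ 2 + x ^ 2) ^ m
      = (1 / Real.Gamma m) * ∫ s in Ioi (0:ℝ), F t s := by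
    intro t
    have h0 : ∫ s in Ioi (0:ℝ), F t s
        = Real.cos t * ((1 / (t ^ 2 + x ^ 2)) ^ m * Real.Gamma m) := by
      rw [hF_def]
      simp only
      rw [MeasureTheory.integral_const_mul, integral_rpow_mul_exp_neg_mul_Ioi hm (hr t)]
    rw [h0, one_div ((t:ℝ) ^ 2 + x ^ 2), Real.inv_rpow (hr t).le]
    field_simp
  have hGmeas : AEStronglyMeasurable (Function.uncurry G)
      (((volume : Measure ℝ).restrict (Ioi 0)).prod ((volume : Measure ℝ).restrict (Ioi 0))) := by
    apply Measurable.aestronglyMeasurable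
    rw [hG_def]
    fun_prop
  have hFmeas : AEStronglyMeasurable (Function.uncurry F)
      (((volume : Measure ℝ).restrict (Ioi 0)).prod ((volume : Measure ℝ).restrict (Ioi 0))) := by
    apply Measurable.aestronglyMeasurable
    rw [hF_def]
    fun_prop
  have hGsplit : ∀ t s : ℝ, G t s
      = s ^ (m - 1) * (Real.exp (-(x ^ 2 * s)) * Real.exp (-s * t ^ 2)) := by
    intro t s
    rw [hG_def, ← Real.exp_add]
    ring_nf
  have hpow : ∀ s : ℝ, 0 < s → s ^ (m - 1) * s ^ (-(1/2) : ℝ) = s ^ (-a) := by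
    intro s hs
    rw [← Real.rpow_add hs]
    congr 1
    rw [hm_def]; ring
  have hsqrt : ∀ s : ℝ, 0 < s → Real.sqrt (π / s) = Real.sqrt π * s ^ (-(1/2) : ℝ) := by
    intro s hs
    rw [Real.sqrt_div (Real.pi_pos.le), Real.sqrt_eq_rpow s, div_eq_mul_inv,
      ← Real.rpow_neg hs.le]
  -- integrability of G on the product
  have hGint : Integrable (Function.uncurry G)
      (((volume : Measure ℝ).restrict (Ioi 0)).prod ((volume : Measure ℝ).restrict (Ioi 0))) := by
    rw [MeasureTheory.integrable_prod_iff' hGmeas]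
    constructor
    · filter_upwards [ae_restrict_mem measurableSet_Ioi] with s hs
      have h0 : (fun t => Function.uncurry G (t, s))
          = fun t => (s ^ (m - 1) * Real.exp (-(x ^ 2 * s))) * Real.exp (-s * t ^ 2) := by
        funext t
        simp only [Function.uncurry]
        rw [hGsplit t s]; ring
      rw [h0]
      exact ((integrable_exp_neg_mul_sq hs).integrableOn).const_mul _
    · have hexp : IntegrableOn
          (fun s : ℝ => (Real.sqrt π / 2) * (s ^ (-a) * Real.exp (-(x ^ 2 * s)))) (Ioi 0) :=
        (int_rpow_exp (by linarith) (by positivity)).const_mul _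
      refine Integrable.congr hexp ?_
      filter_upwards [ae_restrict_mem measurableSet_Ioi] with s hs
      have hs' : (0:ℝ) < s := hs
      have hnorm : ∀ t : ℝ, ‖Function.uncurry G (t, s)‖
          = (s ^ (m - 1) * Real.exp (-(x ^ 2 * s))) * Real.exp (-s * t ^ 2) := by
        intro t
        have hpos : 0 < G t s := by rw [hG_def]; positivity
        simp only [Function.uncurry]
        rw [Real.norm_eq_abs, abs_of_pos hpos, hGsplit t s]; ring
      simp only [hnorm]
      rw [MeasureTheory.integral_const_mul, integral_gaussian_Ioi, hsqrt s hs']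
      rw [← hpow s hs']
      ring
  -- integrability of F
  have hFint : Integrable (Function.uncurry F)
      (((volume : Measure ℝ).restrict (Ioi 0)).prod ((volume : Measure ℝ).restrict (Ioi 0))) := by
    refine hGint.mono' hFmeas ?_
    rw [Measure.prod_restrict]
    filter_upwards [ae_restrict_mem (measurableSet_Ioi.prod measurableSet_Ioi)] with p hp
    have hs' : (0:ℝ) < p.2 := hp.2
    have hGpos : 0 < G p.1 p.2 := by rw [hG_def]; simp only; positivity
    have he : Function.uncurry F p = Real.cos p.1 * Function.uncurry G p := rfl
    have hGpos' : 0 < Function.uncurry G p := hGpos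
    rw [he, Real.norm_eq_abs, abs_mul, abs_of_pos hGpos']
    exact mul_le_of_le_one_left hGpos'.le (Real.abs_cos_le_one _)
  -- inner integral computation
  have hinner : ∀ s : ℝ, s ∈ Ioi (0:ℝ) → (∫ t in Ioi (0:ℝ), F t s)
      = (Real.sqrt π / 2) * (s ^ (-a) * Real.exp (-(x ^ 2 * s)) * Real.exp (-(1/(4*s)))) := by
    intro s hs
    have hs' : (0:ℝ) < s := hs
    have h0 : (fun t => F t s)
        = fun t => (s ^ (m - 1) * Real.exp (-(x ^ 2 * s))) * (Real.cos t * Real.exp (-s * t ^ 2)) := by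
      funext t
      rw [hF_def]
      simp only
      have e : Real.exp (-((t ^ 2 + x ^ 2) * s))
          = Real.exp (-(x ^ 2 * s)) * Real.exp (-s * t ^ 2) := by
        rw [← Real.exp_add]; ring_nf
      rw [e]; ring
    rw [h0, MeasureTheory.integral_const_mul, cos_gaussian_Ioi hs', hsqrt s hs', ← hpow s hs']
    ring
  calc ∫ t in Ioi (0:ℝ), Real.cos t / (t ^ 2 + x ^ 2) ^ m
      = ∫ t in Ioi (0:ℝ), (1 / Real.Gamma m) * ∫ s in Ioi (0:ℝ), F t s := by
        simp_rw [stepA]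
    _ = (1 / Real.Gamma m) * ∫ t in Ioi (0:ℝ), ∫ s in Ioi (0:ℝ), F t s :=
        MeasureTheory.integral_const_mul _ _
    _ = (1 / Real.Gamma m) * ∫ s in Ioi (0:ℝ), ∫ t in Ioi (0:ℝ), F t s := by
        rw [MeasureTheory.integral_integral_swap hFint]
    _ = (1 / Real.Gamma m) * ∫ s in Ioi (0:ℝ),
          (Real.sqrt π / 2) * (s ^ (-a) * Real.exp (-(x ^ 2 * s)) * Real.exp (-(1/(4*s)))) := by
        rw [setIntegral_congr_fun measurableSet_Ioi hinner]
    _ = (1 / Real.Gamma m) * ((Real.sqrt π / 2) *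
          ∫ s in Ioi (0:ℝ), s ^ (-a) * Real.exp (-(x ^ 2 * s)) * Real.exp (-(1/(4*s)))) := by
        rw [MeasureTheory.integral_const_mul]

lemma subst_step {a b : ℝ} (hb : 0 < b) :
    ∫ s in Ioi (0:ℝ), s ^ (-a) * Real.exp (-(2 * b * s)) * Real.exp (-(1/(4*s)))
      = 2 ^ (a - 1 : ℝ) *
        ∫ ψ in Ioi (0:ℝ), ψ ^ (a - 2 : ℝ) * Real.exp (-(b/ψ)) * Real.exp (-(ψ/2)) := by
  set h : ℝ → ℝ := fun s => s ^ (-a) * Real.exp (-(2 * b * s)) * Real.exp (-(1/(4*s)))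
    with h_def
  set g : ℝ → ℝ := fun u => u ^ (a - 2 : ℝ) * Real.exp (-(2 * b / u)) * Real.exp (-(u/4))
    with g_def
  have step1 : ∫ s in Ioi (0:ℝ), h s = ∫ u in Ioi (0:ℝ), g u := by
    rw [← integral_comp_rpow_Ioi h (p := (-1:ℝ)) (by norm_num)]
    refine setIntegral_congr_fun measurableSet_Ioi (fun u hu => ?_) |>.symm
    have hu' : (0:ℝ) < u := hu
    have h1 : u ^ ((-1:ℝ)) = u⁻¹ := Real.rpow_neg_one u
    have h2 : (u⁻¹) ^ (-a) = u ^ a := by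
      rw [← Real.rpow_neg_one u, ← Real.rpow_mul hu'.le]
      norm_num
    have h3 : (2:ℝ) * b * u⁻¹ = 2 * b / u := by ring
    have h4 : 1/(4 * u⁻¹) = u / 4 := by field_simp
    rw [smul_eq_mul, h_def]
    simp only
    rw [h1, h2, h3, h4]
    rw [g_def]
    simp only
    have h5 : |(-1:ℝ)| * u ^ ((-1:ℝ) - 1) = u ^ (-2:ℝ) := by
      rw [abs_neg, abs_one, one_mul]; norm_num
    rw [h5]
    have h6 : u ^ (-2:ℝ) * u ^ a = u ^ (a - 2 : ℝ) := by
      rw [← Real.rpow_add hu']; ring_nf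
    calc u ^ (a - 2 : ℝ) * Real.exp (-(2 * b / u)) * Real.exp (-(u/4))
        = (u ^ (-2:ℝ) * u ^ a) * Real.exp (-(2 * b / u)) * Real.exp (-(u/4)) := by rw [h6]
      _ = u ^ (-2:ℝ) * (u ^ a * Real.exp (-(2 * b / u)) * Real.exp (-(u/4))) := by ring
  have step2 : ∫ u in Ioi (0:ℝ), g u
      = 2 * ∫ ψ in Ioi (0:ℝ), g (2 * ψ) := by
    rw [integral_comp_mul_left_Ioi g 0 (by norm_num : (0:ℝ) < 2)]
    simp [mul_zero]
  have step3 : ∀ ψ ∈ Ioi (0:ℝ), g (2 * ψ)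
      = 2 ^ (a - 2 : ℝ) * (ψ ^ (a - 2 : ℝ) * Real.exp (-(b/ψ)) * Real.exp (-(ψ/2))) := by
    intro ψ hψ
    have hψ' : (0:ℝ) < ψ := hψ
    rw [g_def]
    simp only
    rw [Real.mul_rpow (by norm_num) hψ'.le]
    have e1 : 2 * b / (2 * ψ) = b / ψ := by field_simp
    have e2 : 2 * ψ / 4 = ψ / 2 := by ring
    rw [e1, e2]
    ring
  rw [step1, step2, setIntegral_congr_fun measurableSet_Ioi step3,
    MeasureTheory.integral_const_mul, ← mul_assoc]
  congr 1
  rw [show (a - 1 : ℝ) = 1 + (a - 2) by ring,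
    Real.rpow_add (by norm_num : (0:ℝ) < 2), Real.rpow_one]

/-- If `θ | ψ ∼ Laplace(ψ)` (density `(2ψ)⁻¹ e^{-|θ|/ψ}`) and `ψ ∼ Gamma(a, 1/2)`
(density `((1/2)^a/Γ(a)) ψ^{a-1} e^{-ψ/2}`), the marginal density of `θ` is
`Π(θ) = (1/(2^{(1+a)/2} Γ(a))) |θ|^{(a-1)/2} K_{1-a}(√(2|θ|))`. -/
theorem marginal_dl_density (a : ℝ) (ha0 : 0 < a) (ha1 : a < 1) (θ : ℝ) (hθ : θ ≠ 0) :
    ∫ ψ in Set.Ioi (0:ℝ),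
        (2*ψ)⁻¹ * Real.exp (-|θ|/ψ) *
          (((1:ℝ)/2) ^ a / Real.Gamma a * ψ ^ (a-1) * Real.exp (-ψ/2)) =
      dlDensity a θ := by
  have hb : 0 < |θ| := abs_pos.mpr hθ
  have hΓa : 0 < Real.Gamma a := Real.Gamma_pos_of_pos ha0
  have hm : 0 < (1 - a + 1/2 : ℝ) := by linarith
  have hΓm : 0 < Real.Gamma (1 - a + 1/2) := Real.Gamma_pos_of_pos hm
  have h2b : 0 < 2 * |θ| := by positivity
  have hx : 0 < Real.sqrt (2 * |θ|) := Real.sqrt_pos.mpr h2b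
  have hx2 : Real.sqrt (2 * |θ|) ^ 2 = 2 * |θ| := Real.sq_sqrt h2b.le
  set I := ∫ ψ in Ioi (0:ℝ), ψ ^ (a - 2 : ℝ) * Real.exp (-(|θ|/ψ)) * Real.exp (-(ψ/2))
    with hI
  have hL : (∫ ψ in Set.Ioi (0:ℝ),
        (2*ψ)⁻¹ * Real.exp (-|θ|/ψ) *
          (((1:ℝ)/2) ^ a / Real.Gamma a * ψ ^ (a-1) * Real.exp (-ψ/2)))
      = ((1/2:ℝ) ^ a / Real.Gamma a / 2) * I := by
    rw [hI, ← MeasureTheory.integral_const_mul]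
    refine setIntegral_congr_fun measurableSet_Ioi (fun ψ hψ => ?_)
    have hψ' : (0:ℝ) < ψ := hψ
    have e : ψ ^ (a - 2 : ℝ) = ψ⁻¹ * ψ ^ (a - 1 : ℝ) := by
      rw [← Real.rpow_neg_one ψ, ← Real.rpow_add hψ']
      ring_nf
    rw [show -|θ|/ψ = -(|θ|/ψ) by ring, show -ψ/2 = -(ψ/2) by ring, e, mul_inv]
    ring
  rw [hL, dlDensity, besselK, fubini_step ha0 ha1 hx]
  simp only [hx2]
  rw [subst_step hb, ← hI]
  -- now pure constant algebra
  have hπ : (0:ℝ) < Real.sqrt π := Real.sqrt_pos.mpr Real.pi_pos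
  have hkey : |θ| ^ ((a-1)/2 : ℝ) * (2 * Real.sqrt (2 * |θ|)) ^ (1 - a : ℝ)
      = 2 ^ ((3 - 3*a)/2 : ℝ) := by
    rw [Real.mul_rpow (by norm_num) hx.le, Real.sqrt_eq_rpow,
      ← Real.rpow_mul h2b.le, Real.mul_rpow (by norm_num) (abs_nonneg θ)]
    have h1 : |θ| ^ ((a-1)/2 : ℝ) * |θ| ^ (1/2 * (1-a) : ℝ) = 1 := by
      rw [← Real.rpow_add hb, show ((a-1)/2 + 1/2 * (1-a) : ℝ) = 0 by ring, Real.rpow_zero]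
    have h2 : (2:ℝ) ^ (1-a : ℝ) * 2 ^ (1/2 * (1-a) : ℝ) = 2 ^ ((3 - 3*a)/2 : ℝ) := by
      rw [← Real.rpow_add (by norm_num : (0:ℝ) < 2)]; congr 1; ring
    calc |θ| ^ ((a-1)/2 : ℝ) * (2 ^ (1-a:ℝ) * (2 ^ (1/2*(1-a):ℝ) * |θ| ^ (1/2*(1-a):ℝ)))
        = (|θ| ^ ((a-1)/2 : ℝ) * |θ| ^ (1/2 * (1-a) : ℝ))
            * ((2:ℝ) ^ (1-a : ℝ) * 2 ^ (1/2 * (1-a) : ℝ)) := by ring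
      _ = 2 ^ ((3 - 3*a)/2 : ℝ) := by rw [h1, h2, one_mul]
  have hpow2 : (2:ℝ) ^ ((3-3*a)/2:ℝ) * 2 ^ (a-1:ℝ) = 2 ^ (-a:ℝ) * 2 ^ ((1+a)/2:ℝ) := by
    rw [← Real.rpow_add (by norm_num : (0:ℝ) < 2), ← Real.rpow_add (by norm_num : (0:ℝ) < 2)]
    congr 1; ring
  have hp1 : ((1:ℝ)/2) ^ a = 2 ^ (-a:ℝ) := by
    rw [one_div, ← Real.rpow_neg_one (2:ℝ), ← Real.rpow_mul (by norm_num : (0:ℝ) ≤ 2)]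
    ring_nf
  have h2p : (0:ℝ) < 2 ^ ((1+a)/2:ℝ) := Real.rpow_pos_of_pos (by norm_num) _
  rw [hp1]
  have hsub : Real.Gamma (1-a+1/2) * (2*Real.sqrt (2*|θ|)) ^ (1-a:ℝ) / Real.sqrt π *
        (1/Real.Gamma (1-a+1/2) * (Real.sqrt π/2 * (2 ^ (a-1:ℝ) * I)))
      = (2*Real.sqrt (2*|θ|)) ^ (1-a:ℝ) * (2 ^ (a-1:ℝ) * I) / 2 := by
    have hcG : Real.Gamma (1-a+1/2) * (Real.Gamma (1-a+1/2))⁻¹ = 1 := mul_inv_cancel₀ hΓm.ne'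
    have hcP : Real.sqrt π * (Real.sqrt π)⁻¹ = 1 := mul_inv_cancel₀ hπ.ne'
    set X := (2*Real.sqrt (2*|θ|)) ^ (1-a:ℝ)
    set Y := 2 ^ (a-1:ℝ) * I
    linear_combination (X * Y / 2 * Real.sqrt π * (Real.sqrt π)⁻¹) * hcG + (X * Y / 2) * hcP
  rw [hsub]
  have hre : 1/((2:ℝ) ^ ((1+a)/2:ℝ) * Real.Gamma a) * |θ| ^ ((a-1)/2:ℝ) *
        ((2*Real.sqrt (2*|θ|)) ^ (1-a:ℝ) * (2 ^ (a-1:ℝ) * I) / 2)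
      = |θ| ^ ((a-1)/2:ℝ) * (2*Real.sqrt (2*|θ|)) ^ (1-a:ℝ) * 2 ^ (a-1:ℝ) * I /
          (2 ^ ((1+a)/2:ℝ) * Real.Gamma a * 2) := by ring
  rw [hre, hkey, hpow2]
  have hc2 : (2:ℝ) ^ ((1+a)/2:ℝ) * ((2:ℝ) ^ ((1+a)/2:ℝ))⁻¹ = 1 := mul_inv_cancel₀ h2p.ne'
  linear_combination (-(2 ^ (-a:ℝ) * I / 2) * (Real.Gamma a)⁻¹) * hc2
end

section
/- Let a ∈ (0,1), τ > 0, and suppose the marginal distribution of φ is Beta(1/n, 1 − 1/n). Then the marginal density of θ given τ, defined by integrating (2φτ)^{-1} e^{-|θ|/(φτ)} against the Beta(1/n, 1−1/n) density of φ over (0,1), is proportional to e^{-|θ|/τ} |θ|^{1/n − 1}, i.e., a wrapped Gamma WG(τ^{-1}, 1/n) density. -/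
open Real MeasureTheory Set

lemma key_cov (r c : ℝ) (hr0 : 0 < r) (hr1 : r < 1) (hc : 0 < c) :
    ∫ φ in Set.Ioo (0:ℝ) 1, φ ^ (r-2) * (1-φ) ^ (-r) * Real.exp (-c/φ)
      = Real.exp (-c) * c ^ (r-1) * Real.Gamma (1-r) := by
  have himg : (fun u : ℝ => c/(u+c)) '' Set.Ioi 0 = Set.Ioo (0:ℝ) 1 := by
    ext φ
    constructor
    · rintro ⟨u, hu, rfl⟩
      have hu : (0:ℝ) < u := hu
      refine ⟨by positivity, ?_⟩
      rw [div_lt_one (by linarith)]; linarith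
    · rintro ⟨h0, h1⟩
      refine ⟨c/φ - c, ?_, ?_⟩
      · simp only [Set.mem_Ioi, sub_pos]
        rw [lt_div_iff₀ h0]; nlinarith
      · have h : c/φ - c + c = c/φ := by ring
        simp only [h]
        field_simp
  have hderiv : ∀ u ∈ Set.Ioi (0:ℝ),
      HasDerivWithinAt (fun u : ℝ => c/(u+c)) (-(c/(u+c)^2)) (Set.Ioi 0) u := by
    intro u hu
    have hu : (0:ℝ) < u := hu
    have h : u + c ≠ 0 := by positivity
    have h1 : HasDerivAt (fun u : ℝ => (u + c)⁻¹) (-1/(u+c)^2) u := by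
      exact ((hasDerivAt_id u).add_const c).inv h
    have h2 := h1.const_mul c
    have hfun : (fun u : ℝ => c/(u+c)) = fun u => c * (u+c)⁻¹ := by
      funext v; rw [div_eq_mul_inv]
    have hval : c * (-1/(u+c)^2) = -(c/(u+c)^2) := by ring
    rw [hfun]
    exact (hval ▸ h2).hasDerivWithinAt
  have hinj : Set.InjOn (fun u : ℝ => c/(u+c)) (Set.Ioi 0) := by
    intro u hu v hv h
    have hu' : (0:ℝ) < u := hu
    have hv' : (0:ℝ) < v := hv
    have h1 : u + c ≠ 0 := by positivity
    have h2 : v + c ≠ 0 := by positivity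
    simp only at h
    field_simp at h
    linarith
  rw [← himg, MeasureTheory.integral_image_eq_integral_abs_deriv_smul measurableSet_Ioi hderiv hinj]
  have hptw : ∀ u ∈ Set.Ioi (0:ℝ),
      |(-(c/(u+c)^2))| • ((c/(u+c)) ^ (r-2) * (1 - c/(u+c)) ^ (-r) * Real.exp (-c/(c/(u+c))))
      = (Real.exp (-c) * c ^ (r-1)) * (Real.exp (-u) * u ^ ((1-r)-1)) := by
    intro u hu
    have hu : (0:ℝ) < u := hu
    have hs : (0:ℝ) < u + c := by positivity
    have h1 : (1:ℝ) - c/(u+c) = u/(u+c) := by field_simp; ring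
    have h2 : -c/(c/(u+c)) = -(u+c) := by
      field_simp
    have habs : |(-(c/(u+c)^2))| = c/(u+c)^2 := by
      rw [abs_neg, abs_of_nonneg (by positivity)]
    rw [h1, h2, smul_eq_mul, habs]
    have e1 : (c/(u+c)) ^ (r-2) = c^(r-2) * ((u+c)^(r-2))⁻¹ := by
      rw [Real.div_rpow hc.le hs.le, div_eq_mul_inv]
    have e2 : (u/(u+c)) ^ (-r) = u^(-r) * ((u+c)^(-r))⁻¹ := by
      rw [Real.div_rpow hu.le hs.le, div_eq_mul_inv]
    have e3 : Real.exp (-(u+c)) = Real.exp (-u) * Real.exp (-c) := by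
      rw [← Real.exp_add]; ring_nf
    have e4 : ((u+c):ℝ)^(2:ℕ) = (u+c)^((2:ℝ)) := by
      rw [← Real.rpow_natCast]; norm_num
    have hcol : (u+c)^(2:ℕ) * ((u+c)^(r-2) * (u+c)^(-r)) = 1 := by
      rw [e4, ← Real.rpow_add hs, ← Real.rpow_add hs,
        show (2:ℝ) + (r - 2 + -r) = 0 from by ring, Real.rpow_zero]
    have hc1 : c^(r-1) = c * c^(r-2) := by
      nth_rewrite 2 [← Real.rpow_one c]
      rw [← Real.rpow_add hc, show (1:ℝ) + (r-2) = r-1 from by ring]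
    have hABC : (u+c)^((2:ℝ)) ≠ 0 := (Real.rpow_pos_of_pos hs _).ne'
    have hB : ((u+c):ℝ)^(r-2) ≠ 0 := (Real.rpow_pos_of_pos hs _).ne'
    have hC : ((u+c):ℝ)^(-r) ≠ 0 := (Real.rpow_pos_of_pos hs _).ne'
    rw [e1, e2, e3, hc1, show (1:ℝ)-r-1 = -r from by ring]
    have hA2 : ((u+c):ℝ)^(2:ℕ) ≠ 0 := by positivity
    field_simp
    linear_combination (-1 : ℝ) * hcol
  rw [MeasureTheory.setIntegral_congr_fun measurableSet_Ioi hptw,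
    MeasureTheory.integral_const_mul, ← Real.Gamma_eq_integral (by linarith : (0:ℝ) < 1-r)]

/-- If `φ ∼ Beta(1/n, 1 − 1/n)` and `θ | φ, τ ∼ Laplace(φτ)`, then the marginal
density of `θ` given `τ` is proportional to `e^{-|θ|/τ} |θ|^{1/n − 1}`, i.e. a
wrapped Gamma `WG(τ⁻¹, 1/n)` density. -/
theorem marginal_wrapped_gamma (n : ℕ) (hn : 2 ≤ n) (τ : ℝ) (hτ : 0 < τ) :
    ∃ C > 0, ∀ θ : ℝ, θ ≠ 0 →
      ∫ φ in Set.Ioo (0:ℝ) 1,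
          (2*φ*τ)⁻¹ * Real.exp (-|θ|/(φ*τ)) *
            (1 / (Real.Gamma (1/n) * Real.Gamma (1 - 1/n)) *
              φ ^ ((1:ℝ)/n - 1) * (1-φ) ^ (-(1:ℝ)/n)) =
        C * Real.exp (-|θ|/τ) * |θ| ^ ((1:ℝ)/n - 1) := by

  have hn0 : (0:ℝ) < (n:ℝ) := by
    have : 0 < n := by omega
    exact_mod_cast this
  set r : ℝ := (1:ℝ)/n with hrdef
  have hr0 : 0 < r := by positivity
  have hr1 : r < 1 := by
    rw [hrdef, div_lt_one hn0]
    exact_mod_cast by omega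
  have hΓr : 0 < Real.Gamma r := Real.Gamma_pos_of_pos hr0
  have hΓ1r : 0 < Real.Gamma (1-r) := Real.Gamma_pos_of_pos (by linarith)
  refine ⟨τ^(-r) / (2 * Real.Gamma r), by positivity, ?_⟩
  intro θ hθ
  have hθ' : 0 < |θ| := abs_pos.mpr hθ
  set c : ℝ := |θ|/τ with hcdef
  have hcpos : 0 < c := by positivity
  have hcongr : ∀ φ ∈ Set.Ioo (0:ℝ) 1,
      (2*φ*τ)⁻¹ * Real.exp (-|θ|/(φ*τ)) *
        (1 / (Real.Gamma (1/n) * Real.Gamma (1 - 1/n)) * φ ^ ((1:ℝ)/n - 1) * (1-φ) ^ (-(1:ℝ)/n))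
      = (1/(Real.Gamma r * Real.Gamma (1-r)) * (2*τ)⁻¹) *
          (φ^(r-2) * (1-φ)^(-r) * Real.exp (-c/φ)) := by
    intro φ hφ
    have hφ0 : 0 < φ := hφ.1
    have hexp : -|θ|/(φ*τ) = -c/φ := by
      rw [hcdef]; field_simp
    have hpow : φ ^ (r-2) = φ^(r-1) * φ⁻¹ := by
      rw [show r-2 = (r-1)+(-1) from by ring, Real.rpow_add hφ0, Real.rpow_neg_one]
    have hneg : (-(1:ℝ))/(n:ℝ) = -r := by rw [hrdef]; ring
    rw [hexp, hpow, hneg, hrdef]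
    ring
  rw [MeasureTheory.setIntegral_congr_fun measurableSet_Ioo hcongr,
    MeasureTheory.integral_const_mul, key_cov r c hr0 hr1 hcpos]
  have h5 : τ^(r-1) * τ = τ^r := by
    rw [← Real.rpow_add_one (ne_of_gt hτ) (r-1)]
    norm_num
  have h6 : τ^(-r) = (τ^r)⁻¹ := by rw [Real.rpow_neg hτ.le]
  have h7 : c^(r-1) = |θ|^(r-1) / τ^(r-1) := by
    rw [hcdef]; exact Real.div_rpow (abs_nonneg θ) hτ.le _
  have hexp2 : Real.exp (-c) = Real.exp (-|θ|/τ) := by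
    rw [hcdef, neg_div]
  have hτr1 : τ^(r-1) ≠ 0 := (Real.rpow_pos_of_pos hτ _).ne'
  have hτr : τ^r ≠ 0 := (Real.rpow_pos_of_pos hτ _).ne'
  rw [h6, h7, hexp2]
  field_simp
  linear_combination (-1 : ℝ) * h5
end

section
/- For δ > 0 small and a ∈ (0,1), if θ has density Π(θ) = ((1/2)^a/Γ(a)) ∫_0^∞ e^{-|θ|/ψ} (2ψ)^{-1} ψ^{a−1} e^{-ψ/2} dψ, then P(|θ| > δ) ≤ C log(1/δ)/Γ(a) for an absolute constant C > 0 (not depending on a or δ). -/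
open Real MeasureTheory Set

set_option maxHeartbeats 1000000 in
/-- Under the hierarchy `θ | ψ ∼ Laplace(ψ)`, `ψ ∼ Gamma(a, 1/2)`, so that
`P(|θ| > δ) = ((1/2)^a/Γ(a)) ∫_0^∞ e^{-δ/x} x^{a−1} e^{-x/2} dx`, one has
`P(|θ| > δ) ≤ C log(1/δ)/Γ(a)` for small `δ > 0`, where `C` is an absolute
constant not depending on `a` or `δ`. -/
theorem dl_tail_bound :
    ∃ C > 0, ∃ δ₀ > 0, ∀ a : ℝ, 0 < a → a < 1 → ∀ δ : ℝ, 0 < δ → δ < δ₀ →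
      ((1:ℝ)/2) ^ a / Real.Gamma a *
          ∫ x in Set.Ioi (0:ℝ), Real.exp (-δ/x) * x ^ (a-1) * Real.exp (-x/2) ≤
        C * Real.log (1/δ) / Real.Gamma a := by
  refine ⟨4, by norm_num, Real.exp (-3), Real.exp_pos _, ?_⟩
  intro a ha ha1 δ hδ hδ0
  set f : ℝ → ℝ := fun x => Real.exp (-δ/x) * x ^ (a-1) * Real.exp (-x/2) with hfdef
  have hΓ : 0 < Real.Gamma a := Real.Gamma_pos_of_pos ha
  have hδ1 : δ < 1 := lt_trans hδ0 (by
    rw [Real.exp_lt_one_iff]; norm_num)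
  have hL : 3 ≤ Real.log (1/δ) := by
    have := Real.log_lt_log hδ hδ0
    rw [Real.log_exp] at this
    rw [one_div, Real.log_inv]
    linarith
  -- measurability
  have hmeas : Measurable f := by
    unfold f; fun_prop
  -- pointwise bounds
  have hb1 : ∀ x ∈ Ioc (0:ℝ) δ, f x ≤ Real.exp (-1) / δ := by
    intro x hx
    obtain ⟨hx0, hxδ⟩ := hx
    have hx1 : x ≤ 1 := hxδ.trans hδ1.le
    have ht1 : 1 ≤ δ / x := (one_le_div hx0).mpr hxδ
    have h2 : Real.exp 1 * (δ/x) ≤ Real.exp (δ/x) := by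
      have h3 := Real.add_one_le_exp (δ/x - 1)
      rw [Real.exp_sub, le_div_iff₀ (Real.exp_pos 1)] at h3
      nlinarith [Real.exp_pos (1:ℝ)]
    have hexp : Real.exp (-δ/x) ≤ Real.exp (-1) * x / δ := by
      rw [neg_div, Real.exp_neg, Real.exp_neg]
      have heq : (Real.exp 1)⁻¹ * x / δ = (Real.exp 1 * (δ/x))⁻¹ := by
        rw [mul_inv, inv_div]; field_simp
      rw [heq]
      exact inv_anti₀ (by positivity) h2
    have hrp : x ^ (a-1) ≤ x ^ (-1:ℝ) :=
      Real.rpow_le_rpow_of_exponent_ge hx0 hx1 (by linarith)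
    have he3 : Real.exp (-x/2) ≤ 1 :=
      Real.exp_le_one_iff.mpr (by apply div_nonpos_of_nonpos_of_nonneg <;> linarith)
    calc f x ≤ (Real.exp (-1) * x / δ) * x ^ (-1:ℝ) * 1 := by
          apply mul_le_mul _ he3 (Real.exp_pos _).le (by positivity)
          exact mul_le_mul hexp hrp (Real.rpow_nonneg hx0.le _) (by positivity)
      _ = Real.exp (-1) / δ := by
          rw [Real.rpow_neg_one]; field_simp
  have hb2 : ∀ x ∈ Ioc δ 1, f x ≤ x⁻¹ := by
    intro x hx
    obtain ⟨hxδ, hx1⟩ := hx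
    have hx0 : 0 < x := hδ.trans hxδ
    have hrp : x ^ (a-1) ≤ x ^ (-1:ℝ) :=
      Real.rpow_le_rpow_of_exponent_ge hx0 hx1 (by linarith)
    have he1 : Real.exp (-δ/x) ≤ 1 :=
      Real.exp_le_one_iff.mpr (by apply div_nonpos_of_nonpos_of_nonneg <;> linarith)
    have he3 : Real.exp (-x/2) ≤ 1 :=
      Real.exp_le_one_iff.mpr (by apply div_nonpos_of_nonpos_of_nonneg <;> linarith)
    calc f x ≤ 1 * x ^ (-1:ℝ) * 1 := by
          apply mul_le_mul _ he3 (Real.exp_pos _).le (by positivity)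
          apply mul_le_mul he1 hrp (Real.rpow_nonneg hx0.le _) one_pos.le
      _ = x⁻¹ := by rw [Real.rpow_neg_one]; ring
  have hb3 : ∀ x ∈ Ioi (1:ℝ), f x ≤ Real.exp (-(1/2) * x) := by
    intro x hx
    have hx1 : (1:ℝ) ≤ x := le_of_lt hx
    have hx0 : 0 < x := lt_of_lt_of_le one_pos hx1
    have hrp : x ^ (a-1) ≤ 1 := Real.rpow_le_one_of_one_le_of_nonpos hx1 (by linarith)
    have he1 : Real.exp (-δ/x) ≤ 1 :=
      Real.exp_le_one_iff.mpr (by apply div_nonpos_of_nonpos_of_nonneg <;> linarith)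
    calc f x ≤ 1 * 1 * Real.exp (-x/2) := by
          apply mul_le_mul _ le_rfl (Real.exp_pos _).le (by norm_num)
          apply mul_le_mul he1 hrp (Real.rpow_nonneg hx0.le _) one_pos.le
      _ = Real.exp (-(1/2) * x) := by simp only [one_mul, one_mul]; congr 1; ring
  have hfnn : ∀ x ∈ Ioi (0:ℝ), 0 ≤ f x := by
    intro x hx
    have : (0:ℝ) ≤ x := le_of_lt hx
    positivity
  -- integrability
  have hint1 : IntegrableOn f (Ioc 0 δ) := by
    apply Integrable.mono' (integrableOn_const (C := Real.exp (-1) / δ) (by simp [Real.volume_Ioc]))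
      hmeas.aestronglyMeasurable.restrict
    filter_upwards [ae_restrict_mem measurableSet_Ioc] with x hx
    rw [Real.norm_eq_abs, abs_of_nonneg (hfnn x hx.1)]
    exact hb1 x hx
  have hint2' : IntegrableOn (fun x : ℝ => x⁻¹) (Ioc δ 1) := by
    apply (ContinuousOn.integrableOn_Icc _).mono_set Ioc_subset_Icc_self
    exact continuousOn_id.inv₀ fun x hx => ne_of_gt (hδ.trans_le hx.1)
  have hint2 : IntegrableOn f (Ioc δ 1) := by
    apply Integrable.mono' hint2' hmeas.aestronglyMeasurable.restrict
    filter_upwards [ae_restrict_mem measurableSet_Ioc] with x hx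
    rw [Real.norm_eq_abs, abs_of_nonneg (hfnn x (hδ.trans hx.1))]
    exact hb2 x hx
  have hint3' : IntegrableOn (fun x : ℝ => Real.exp (-(1/2) * x)) (Ioi 1) :=
    exp_neg_integrableOn_Ioi 1 (by norm_num)
  have hint3 : IntegrableOn f (Ioi 1) := by
    apply Integrable.mono' hint3' hmeas.aestronglyMeasurable.restrict
    filter_upwards [ae_restrict_mem measurableSet_Ioi] with x hx
    rw [Real.norm_eq_abs, abs_of_nonneg (hfnn x (show (0:ℝ) < x from lt_trans one_pos hx))]
    exact hb3 x hx
  -- splitting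
  have hsplit : ∫ x in Ioi (0:ℝ), f x =
      (∫ x in Ioc (0:ℝ) δ, f x) + (∫ x in Ioc δ 1, f x) + ∫ x in Ioi (1:ℝ), f x := by
    have e1 : Ioi (0:ℝ) = Ioc 0 1 ∪ Ioi 1 := (Ioc_union_Ioi_eq_Ioi zero_le_one).symm
    have e2 : Ioc (0:ℝ) 1 = Ioc 0 δ ∪ Ioc δ 1 := (Ioc_union_Ioc_eq_Ioc hδ.le hδ1.le).symm
    rw [e1, setIntegral_union Ioc_disjoint_Ioi_same measurableSet_Ioi
      (by rw [e2]; exact hint1.union hint2) hint3, e2,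
      setIntegral_union (Ioc_disjoint_Ioc_of_le le_rfl) measurableSet_Ioc hint1 hint2]
  -- bounds on each piece
  have hB1 : ∫ x in Ioc (0:ℝ) δ, f x ≤ 1 := by
    calc ∫ x in Ioc (0:ℝ) δ, f x ≤ ∫ _x in Ioc (0:ℝ) δ, Real.exp (-1) / δ := by
          apply setIntegral_mono_on hint1 (integrableOn_const (C := Real.exp (-1) / δ) (by
            simp [Real.volume_Ioc])) measurableSet_Ioc hb1
      _ = δ * (Real.exp (-1) / δ) := by
          rw [setIntegral_const, Real.volume_real_Ioc_of_le hδ.le, sub_zero,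
            smul_eq_mul]
      _ = Real.exp (-1) := by field_simp
      _ ≤ 1 := Real.exp_le_one_iff.mpr (by norm_num)
  have hB2 : ∫ x in Ioc δ 1, f x ≤ Real.log (1/δ) := by
    calc ∫ x in Ioc δ 1, f x ≤ ∫ x in Ioc δ 1, x⁻¹ := by
          exact setIntegral_mono_on hint2 hint2' measurableSet_Ioc hb2
      _ = Real.log (1/δ) := by
          have h := integral_inv_of_pos hδ (one_pos : (0:ℝ) < 1)
          rw [intervalIntegral.integral_of_le hδ1.le] at h
          rw [h]
  have hB3 : ∫ x in Ioi (1:ℝ), f x ≤ 2 := by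
    calc ∫ x in Ioi (1:ℝ), f x ≤ ∫ x in Ioi (1:ℝ), Real.exp (-(1/2) * x) := by
          exact setIntegral_mono_on hint3 hint3' measurableSet_Ioi hb3
      _ = ∫ x in Ioi (1:ℝ), Real.exp (-(1/2 * x)) := by
          congr 1; ext x; rw [neg_mul]
      _ = (1/2:ℝ)⁻¹ • ∫ x in Ioi ((1/2:ℝ) * 1), Real.exp (-x) :=
          MeasureTheory.integral_comp_mul_left_Ioi (fun y => Real.exp (-y)) 1 (by norm_num)
      _ = 2 * Real.exp (-(1/2)) := by
          rw [integral_exp_neg_Ioi]; norm_num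
      _ ≤ 2 := by
          have : Real.exp (-(1/2:ℝ)) ≤ 1 := Real.exp_le_one_iff.mpr (by norm_num)
          linarith
  have hI : ∫ x in Ioi (0:ℝ), f x ≤ 4 * Real.log (1/δ) := by
    rw [hsplit]; linarith
  have hInn : 0 ≤ ∫ x in Ioi (0:ℝ), f x :=
    setIntegral_nonneg measurableSet_Ioi hfnn
  have hpow : ((1:ℝ)/2) ^ a ≤ 1 :=
    Real.rpow_le_one (by norm_num) (by norm_num) ha.le
  have key : ((1:ℝ)/2) ^ a * ∫ x in Ioi (0:ℝ), f x ≤ 4 * Real.log (1/δ) := by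
    calc ((1:ℝ)/2) ^ a * ∫ x in Ioi (0:ℝ), f x ≤ 1 * ∫ x in Ioi (0:ℝ), f x :=
          mul_le_mul_of_nonneg_right hpow hInn
      _ = ∫ x in Ioi (0:ℝ), f x := one_mul _
      _ ≤ 4 * Real.log (1/δ) := hI
  rw [div_mul_eq_mul_div, div_le_div_iff_of_pos_right hΓ]
  exact key
end
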